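/- Let (f₁, f₂) : (g, h, ∂, φ) → (g', h', ∂', φ') be a morphism of crossed modules of Lie algebras over ℝ. Then the following are equivalent: (i) the induced linear maps Ker(∂) → Ker(∂') (restriction of f₁) and h / Im(∂) → h' / Im(∂') (induced by f₂) are both bijective; (ii) both of the following hold: (a) for all X, X' ∈ h, the map f₁ restricts to a bijection from { u ∈ g : ∂(u) = X' − X } onto { u' ∈ g' : ∂'(u') = f₂(X') − f₂(X) }, and (b) for every Y ∈ h' there exists X ∈ h such that Y − f₂(X) lies in the image of ∂'. -/

import Mathlib

/-- For a morphism `(f₁, f₂)` of crossed modules of Lie algebras over `ℝ`, the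
following are equivalent:
(i) the induced maps `Ker ∂ → Ker ∂'` (restriction of `f₁`) and
    `h ⧸ Im ∂ → h' ⧸ Im ∂'` (induced by `f₂`) are both bijective;
(ii) (a) for all `X, X' ∈ h`, `f₁` restricts to a bijection from
        `{ u : ∂ u = X' − X }` onto `{ u' : ∂' u' = f₂ X' − f₂ X }`, and
     (b) for every `Y ∈ h'` there exists `X ∈ h` with `Y − f₂ X ∈ Im ∂'`. -/
theorem crossedModule_quasiIso_iff_equivalence
    {g h g' h' : Type*}
    [LieRing g] [LieAlgebra ℝ g] [LieRing h] [LieAlgebra ℝ h]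
    [LieRing g'] [LieAlgebra ℝ g'] [LieRing h'] [LieAlgebra ℝ h']
    (d : g →ₗ⁅ℝ⁆ h) (φ : h →ₗ⁅ℝ⁆ LieDerivation ℝ g g)
    (peiffer : ∀ u v : g, φ (d u) v = ⁅u, v⁆)
    (equivar : ∀ (X : h) (u : g), d (φ X u) = ⁅X, d u⁆)
    (d' : g' →ₗ⁅ℝ⁆ h') (φ' : h' →ₗ⁅ℝ⁆ LieDerivation ℝ g' g')
    (peiffer' : ∀ u v : g', φ' (d' u) v = ⁅u, v⁆)
    (equivar' : ∀ (X : h') (u : g'), d' (φ' X u) = ⁅X, d' u⁆)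
    (f₁ : g →ₗ⁅ℝ⁆ g') (f₂ : h →ₗ⁅ℝ⁆ h')
    (hcomm : ∀ u : g, f₂ (d u) = d' (f₁ u))
    (hequiv : ∀ (X : h) (u : g), f₁ (φ X u) = φ' (f₂ X) (f₁ u)) :
    -- (i): quasi-isomorphism
    (((∀ u v : g, d u = 0 → d v = 0 → f₁ u = f₁ v → u = v) ∧
      (∀ u' : g', d' u' = 0 → ∃ u : g, d u = 0 ∧ f₁ u = u')) ∧
     ((∀ X : h, (∃ u' : g', d' u' = f₂ X) → ∃ u : g, d u = X) ∧
      (∀ Y : h', ∃ (X : h) (u' : g'), d' u' = Y - f₂ X)))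
    ↔
    -- (ii): fully faithful and essentially surjective
    ((∀ X X' : h,
        (∀ u v : g, d u = X' - X → d v = X' - X → f₁ u = f₁ v → u = v) ∧
        (∀ u' : g', d' u' = f₂ X' - f₂ X → ∃ u : g, d u = X' - X ∧ f₁ u = u')) ∧
     (∀ Y : h', ∃ (X : h) (u' : g'), d' u' = Y - f₂ X)) := by
  constructor
  · rintro ⟨⟨hinj, hsur⟩, hmid, hess⟩
    refine ⟨fun X X' => ⟨?_, ?_⟩, hess⟩
    · intro u v hu hv hf
      have h1 : d (u - v) = 0 := by rw [map_sub d, hu, hv, sub_self]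
      have h2 : d (0 : g) = 0 := d.map_zero
      have h3 : f₁ (u - v) = f₁ 0 := by
        rw [map_sub f₁, hf, sub_self, map_zero f₁]
      exact sub_eq_zero.mp (hinj _ _ h1 h2 h3)
    · intro u' hu'
      obtain ⟨u, hu⟩ := hmid (X' - X) ⟨u', by rw [hu', map_sub f₂]⟩
      have h1 : d' (u' - f₁ u) = 0 := by
        rw [map_sub d', hu', ← hcomm, hu, map_sub f₂, sub_self]
      obtain ⟨w, hw0, hwf⟩ := hsur _ h1
      refine ⟨u + w, ?_, ?_⟩
      · rw [map_add d, hu, hw0, add_zero]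
      · rw [map_add f₁, hwf]; abel
  · rintro ⟨ha, hess⟩
    refine ⟨⟨?_, ?_⟩, ?_, hess⟩
    · intro u v hu hv hf
      exact (ha 0 0).1 u v (by rw [hu, sub_self]) (by rw [hv, sub_self]) hf
    · intro u' hu'
      obtain ⟨u, hu, hf⟩ := (ha 0 0).2 u' (by rw [hu', sub_self])
      exact ⟨u, by rw [hu, sub_self], hf⟩
    · rintro X ⟨u', hu'⟩
      obtain ⟨u, hu, -⟩ := (ha 0 X).2 u' (by rw [hu', map_zero f₂, sub_zero])
      exact ⟨u, by rw [hu, sub_zero]⟩
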